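/- Let g : [a,b] → ℝ be absolutely continuous and x ∈ [a, (a+b)/2]. Let K(t) = t - a on [a,x], K(t) = t - (a+b)/2 on (x, a+b-x], K(t) = t - b on (a+b-x, b]. Then (1/(b-a))∫_a^b K(t) g'(t) dt = (g(x)+g(a+b-x))/2 - (1/(b-a))∫_a^b g(t) dt. -/

import Mathlib

open MeasureTheory Set

theorem kernel_identity_first_order
    (a b : ℝ) (hab : a < b) (x : ℝ) (hx : x ∈ Icc a ((a + b)/2))
    (g g' : ℝ → ℝ)
    (hg : ∀ t ∈ Icc a b, HasDerivAt g (g' t) t)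
    (hg' : IntervalIntegrable g' volume a b)
    (K : ℝ → ℝ)
    (hK : ∀ t, K t = if t ≤ x then t - a
                     else if t ≤ a + b - x then t - (a + b)/2
                     else t - b) :
    (1 / (b - a)) * ∫ t in a..b, K t * g' t
    = (g x + g (a + b - x)) / 2 - (1 / (b - a)) * ∫ t in a..b, g t := by
  obtain ⟨hax, hxm⟩ := hx
  have hxy : x ≤ a + b - x := by linarith
  have hyb : a + b - x ≤ b := by linarith
  have hxb : x ≤ b := le_trans hxy hyb
  have hay : a ≤ a + b - x := le_trans hax hxy
  have hsub : ∀ {p q : ℝ}, a ≤ p → p ≤ q → q ≤ b → uIcc p q ⊆ Icc a b := by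
    intro p q hap hpq hqb
    rw [uIcc_of_le hpq]
    exact Icc_subset_Icc hap hqb
  have hgc : ContinuousOn g (Icc a b) := fun t ht =>
    (hg t ht).continuousAt.continuousWithinAt
  have hg'sub : ∀ {p q : ℝ}, a ≤ p → p ≤ q → q ≤ b →
      IntervalIntegrable g' volume p q := by
    intro p q hap hpq hqb
    refine hg'.mono_set ?_
    rw [uIcc_of_le hpq, uIcc_of_le hab.le]
    exact Icc_subset_Icc hap hqb
  have hgint : ∀ {p q : ℝ}, a ≤ p → p ≤ q → q ≤ b →
      IntervalIntegrable g volume p q := fun hap hpq hqb =>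
    (hgc.mono (hsub hap hpq hqb)).intervalIntegrable
  -- integration by parts on a subinterval with linear kernel
  have key : ∀ (c : ℝ) {p q : ℝ}, a ≤ p → p ≤ q → q ≤ b →
      ∫ t in p..q, (t - c) * g' t
        = (q - c) * g q - (p - c) * g p - ∫ t in p..q, g t := by
    intro c p q hap hpq hqb
    have h := intervalIntegral.integral_mul_deriv_eq_deriv_mul
      (u := fun t => t - c) (u' := fun _ => (1 : ℝ)) (v := g) (v' := g')
      (fun t _ => (hasDerivAt_id t).sub_const c)
      (fun t ht => hg t (hsub hap hpq hqb ht))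
      intervalIntegrable_const
      (hg'sub hap hpq hqb)
    simpa using h
  -- pointwise descriptions of K on the pieces
  have p1 : ∀ t ∈ uIoc a x, K t = t - a := by
    intro t ht
    rw [uIoc_of_le hax] at ht
    rw [hK, if_pos ht.2]
  have p2 : ∀ t ∈ uIoc x (a + b - x), K t = t - (a + b)/2 := by
    intro t ht
    rw [uIoc_of_le hxy] at ht
    rw [hK, if_neg (not_le.2 ht.1), if_pos ht.2]
  have p3 : ∀ t ∈ uIoc (a + b - x) b, K t = t - b := by
    intro t ht
    rw [uIoc_of_le hyb] at ht
    rw [hK, if_neg (not_le.2 (lt_of_le_of_lt hxy ht.1)), if_neg (not_le.2 ht.1)]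
  -- congruence of the piece integrals
  have e1 : ∫ t in a..x, K t * g' t = ∫ t in a..x, (t - a) * g' t :=
    intervalIntegral.integral_congr_ae
      (Filter.Eventually.of_forall fun t ht => by rw [p1 t ht])
  have e2 : ∫ t in x..(a + b - x), K t * g' t
      = ∫ t in x..(a + b - x), (t - (a + b)/2) * g' t :=
    intervalIntegral.integral_congr_ae
      (Filter.Eventually.of_forall fun t ht => by rw [p2 t ht])
  have e3 : ∫ t in (a + b - x)..b, K t * g' t = ∫ t in (a + b - x)..b, (t - b) * g' t :=
    intervalIntegral.integral_congr_ae
      (Filter.Eventually.of_forall fun t ht => by rw [p3 t ht])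
  -- integrability of K * g' on each piece
  have iK : ∀ (c : ℝ) {p q : ℝ}, a ≤ p → p ≤ q → q ≤ b →
      (∀ t ∈ uIoc p q, K t = t - c) →
      IntervalIntegrable (fun t => K t * g' t) volume p q := by
    intro c p q hap hpq hqb hEq
    have base : IntervalIntegrable (fun t => (t - c) * g' t) volume p q :=
      (hg'sub hap hpq hqb).continuousOn_mul (by fun_prop)
    refine base.congr ?_
    intro t ht
    show (t - c) * g' t = K t * g' t
    rw [hEq t ht]
  have iK1 := iK a le_rfl hax hxb p1
  have iK2 := iK ((a + b)/2) hax hxy hyb p2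
  have iK3 := iK b hay hyb le_rfl p3
  -- split the integrals
  have hKsplit : ∫ t in a..b, K t * g' t
      = ((∫ t in a..x, K t * g' t) + ∫ t in x..(a + b - x), K t * g' t)
        + ∫ t in (a + b - x)..b, K t * g' t := by
    rw [intervalIntegral.integral_add_adjacent_intervals iK1 iK2,
      intervalIntegral.integral_add_adjacent_intervals (iK1.trans iK2) iK3]
  have hgsplit : ∫ t in a..b, g t
      = ((∫ t in a..x, g t) + ∫ t in x..(a + b - x), g t)
        + ∫ t in (a + b - x)..b, g t := by
    rw [intervalIntegral.integral_add_adjacent_intervals (hgint le_rfl hax hxb)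
        (hgint hax hxy hyb),
      intervalIntegral.integral_add_adjacent_intervals
        ((hgint le_rfl hax hxb).trans (hgint hax hxy hyb)) (hgint hay hyb le_rfl)]
  rw [hKsplit, e1, e2, e3, key a le_rfl hax hxb, key ((a + b)/2) hax hxy hyb,
    key b hay hyb le_rfl, hgsplit]
  have hba : b - a ≠ 0 := sub_ne_zero.2 hab.ne'
  field_simp
  ring
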